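/- arXiv:1907.09978 — 3 statements merged into one kernel-verified Lean document; each statement's English description precedes it below -/
import Mathlib

section
/- Let x, y, z be positive reals with x ≤ y ≤ z ≤ 1/2 and x + y + z = 1, and suppose a, b, c, h > 0 satisfy x = a*h/((b*h)*(c*h)), y = b*h/((a*h)*(c*h)), z = c*h/((a*h)*(b*h)). Then a*h ≤ 3. -/
/-- Systole bound for once-punctured tori: if `0 < x ≤ y ≤ z ≤ 1/2`,
`x + y + z = 1` and `x = a h/((b h)(c h))` etc. for positive `a, b, c, h`,
then `a h ≤ 3`. -/
theorem stmt_6 (x y z a b c h : ℝ)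
    (hx : 0 < x) (hxy : x ≤ y) (hyz : y ≤ z) (hz : z ≤ 1 / 2)
    (hsum : x + y + z = 1)
    (ha : 0 < a) (hb : 0 < b) (hc : 0 < c) (hh : 0 < h)
    (hxdef : x = a * h / ((b * h) * (c * h)))
    (hydef : y = b * h / ((a * h) * (c * h)))
    (hzdef : z = c * h / ((a * h) * (b * h))) :
    a * h ≤ 3 := by
  have hA : 0 < a * h := mul_pos ha hh
  have hB : 0 < b * h := mul_pos hb hh
  have hC : 0 < c * h := mul_pos hc hh
  have hy : 0 < y := lt_of_lt_of_le hx hxy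
  have hz0 : 0 < z := lt_of_lt_of_le hy hyz
  have key : (a * h) ^ 2 * (y * z) = 1 := by
    rw [hydef, hzdef]
    field_simp
  have hz3 : (1 : ℝ) / 3 ≤ z := by linarith
  have hy2 : (1 - z) / 2 ≤ y := by linarith
  have hyz9 : (1 : ℝ) / 9 ≤ y * z := by
    nlinarith [mul_nonneg (by linarith : (0:ℝ) ≤ 3 * z - 1) (by linarith : (0:ℝ) ≤ 2 - 3 * z),
      mul_pos hy hz0]
  nlinarith [sq_nonneg (a * h - 3), mul_pos hy hz0]
end

section
/- Let ψ be a real-valued function on the oriented edges of the infinite trivalent tree T_∞ satisfying: (i) ψ(e⃗₁) + ψ(e⃗₂) + ψ(e⃗₃) = 1 whenever e⃗₁, e⃗₂, e⃗₃ are the three oriented edges pointing into a common vertex, and (ii) ψ(e⃗) + ψ(-e⃗) = 1 for every edge. Then for every finite subtree T, the sum of ψ(e⃗) over all oriented edges e⃗ with head in T and tail outside T equals 1. -/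
open Finset

/-- Finite subtree sum: if `ψ` on oriented edges (`ψ u v` = value of the edge
with tail `u`, head `v`) of an infinite trivalent tree satisfies the vertex
relation (the three edges into a vertex sum to 1) and the edge relation
(`ψ(e) + ψ(-e) = 1`), then for any finite (connected, nonempty) subtree `S`,
the sum of `ψ` over the oriented edges with head in `S` and tail outside `S`
equals 1. -/
theorem stmt_7 {V : Type*} [DecidableEq V] (G : SimpleGraph V) [G.LocallyFinite] [Infinite V]
    (htree : G.IsTree) (hdeg : ∀ v : V, G.degree v = 3)
    (ψ : V → V → ℝ)
    (hvert : ∀ v : V, ∑ u ∈ G.neighborFinset v, ψ u v = 1)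
    (hedge : ∀ u v : V, G.Adj u v → ψ u v + ψ v u = 1)
    (S : Finset V) (hS : S.Nonempty)
    (hconn : (G.induce (S : Set V)).Connected) :
    ∑ v ∈ S, ∑ u ∈ G.neighborFinset v \ S, ψ u v = 1 := by
  classical
  set H := G.induce (S : Set V) with hH
  -- H is a tree
  have hacyc : H.IsAcyclic := by
    intro v c hc
    exact htree.IsAcyclic _
      (SimpleGraph.Walk.IsCycle.map (f := (SimpleGraph.Embedding.induce (G := G) (S : Set V)).toHom)
        (SimpleGraph.Embedding.induce (G := G) (S : Set V)).injective hc)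
  have htreeH : H.IsTree := ⟨hconn, hacyc⟩
  have hcardS : Fintype.card (S : Set V) = S.card := Fintype.card_coe S
  have hedges : H.edgeFinset.card + 1 = S.card := by
    rw [htreeH.card_edgeFinset, hcardS]
  -- degree of H
  have hdegH : ∀ (v : (S : Set V)), H.degree v = (G.neighborFinset v.1 ∩ S).card := by
    intro v
    rw [SimpleGraph.degree]
    apply Finset.card_bij (fun u _ => u.1)
    · intro u hu
      simp only [SimpleGraph.mem_neighborFinset] at hu
      simp only [mem_inter, SimpleGraph.mem_neighborFinset]
      exact ⟨hu, u.2⟩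
    · intro a ha b hb h
      exact Subtype.ext h
    · intro b hb
      simp only [mem_inter, SimpleGraph.mem_neighborFinset] at hb
      exact ⟨⟨b, hb.2⟩, by rw [SimpleGraph.mem_neighborFinset]; exact hb.1, rfl⟩
  -- sum of inner degrees
  have hsumdeg : ∑ v ∈ S, (G.neighborFinset v ∩ S).card = 2 * (S.card - 1) := by
    have h1 : ∑ v : (S : Set V), H.degree v = 2 * H.edgeFinset.card :=
      SimpleGraph.sum_degrees_eq_twice_card_edges H
    have h2 : ∑ v : (S : Set V), H.degree v = ∑ v ∈ S, (G.neighborFinset v ∩ S).card := by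
      rw [← Finset.sum_attach S (fun v => (G.neighborFinset v ∩ S).card)]
      exact Finset.sum_congr rfl fun v _ => hdegH ⟨v.1, v.2⟩
    omega
  -- the double sum over internal oriented edges
  set P := S.sigma (fun v => G.neighborFinset v ∩ S) with hP
  have hswap : ∀ p ∈ P, (⟨p.2, p.1⟩ : (_ : V) × V) ∈ P := by
    rintro ⟨v, u⟩ hp
    simp only [hP, Finset.mem_sigma, mem_inter, SimpleGraph.mem_neighborFinset] at hp ⊢
    exact ⟨hp.2.2, hp.2.1.symm, hp.1⟩
  have hDsum : ∑ p ∈ P, ψ p.2 p.1 = ∑ p ∈ P, ψ p.1 p.2 := by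
    apply Finset.sum_nbij' (fun p => (⟨p.2, p.1⟩ : (_ : V) × V))
      (fun p => (⟨p.2, p.1⟩ : (_ : V) × V)) hswap hswap
    · rintro ⟨v, u⟩ _; rfl
    · rintro ⟨v, u⟩ _; rfl
    · rintro ⟨v, u⟩ _; rfl
  have hP2 : (2 : ℝ) * ∑ p ∈ P, ψ p.2 p.1 = P.card := by
    have : ∑ p ∈ P, (ψ p.2 p.1 + ψ p.1 p.2) = ∑ p ∈ P, (1 : ℝ) := by
      apply Finset.sum_congr rfl
      rintro ⟨v, u⟩ hp
      simp only [hP, Finset.mem_sigma, mem_inter, SimpleGraph.mem_neighborFinset] at hp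
      exact hedge u v hp.2.1.symm
    rw [Finset.sum_add_distrib, ← hDsum] at this
    simpa [two_mul] using this
  have hPcard : P.card = 2 * (S.card - 1) := by
    rw [hP, Finset.card_sigma]; exact hsumdeg
  have hScard1 : 1 ≤ S.card := Finset.card_pos.2 hS
  have hD : ∑ p ∈ P, ψ p.2 p.1 = (S.card : ℝ) - 1 := by
    have h2 : (2 : ℝ) * ∑ p ∈ P, ψ p.2 p.1 = 2 * ((S.card : ℝ) - 1) := by
      rw [hP2, hPcard]
      push_cast [Nat.cast_sub hScard1]
      ring
    linarith
  -- main computation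
  have hmain : ∀ v ∈ S, ∑ u ∈ G.neighborFinset v \ S, ψ u v
      = 1 - ∑ u ∈ G.neighborFinset v ∩ S, ψ u v := by
    intro v hv
    have hsplit : ∑ u ∈ G.neighborFinset v ∩ S, ψ u v
        + ∑ u ∈ G.neighborFinset v \ S, ψ u v = 1 := by
      rw [Finset.sum_inter_add_sum_sdiff]
      exact hvert v
    linarith
  rw [Finset.sum_congr rfl hmain, Finset.sum_sub_distrib, Finset.sum_sigma']
  rw [← hP, hD]
  simp
end

section
/- In a directed graph whose underlying graph is the infinite trivalent tree, suppose every vertex has at most one outgoing edge (i.e., every vertex is a 'sink' with 3 incoming edges or a 'fork' with exactly 2 incoming edges). Then either (1) there is exactly one sink vertex and every edge points toward it along the unique path, or (2) there are no sink vertices. -/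
/-- Sink/fork dichotomy on the oriented trivalent tree: if the edges of an
infinite trivalent tree are oriented (`D u v` = edge directed from `u` to `v`)
so that every vertex has at most one outgoing edge, then either there is a
unique sink towards which every edge points (each directed edge decreases the
distance to the sink), or there are no sinks at all. -/
theorem stmt_16 {V : Type*} (G : SimpleGraph V) [G.LocallyFinite] [Infinite V]
    (htree : G.IsTree) (hdeg : ∀ v : V, G.degree v = 3)
    (D : V → V → Prop)
    (hDadj : ∀ u v : V, D u v → G.Adj u v)
    (horient : ∀ u v : V, G.Adj u v → (D u v ↔ ¬ D v u))
    (hout : ∀ v u w : V, D v u → D v w → u = w) :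
    (∃ s : V, (∀ u : V, ¬ D s u) ∧
      (∀ s' : V, (∀ u : V, ¬ D s' u) → s' = s) ∧
      (∀ u v : V, D u v → G.dist v s < G.dist u s)) ∨
    (∀ v : V, ∃ u : V, D v u) := by
  by_cases hs : ∃ s : V, ∀ u : V, ¬ D s u
  · obtain ⟨s, hsink⟩ := hs
    have hconn : G.Connected := htree.isConnected
    -- every vertex other than s has a neighbor strictly closer to s
    have hparent : ∀ u : V, u ≠ s → ∃ p, G.Adj u p ∧ G.dist p s < G.dist u s := by
      intro u hu
      obtain ⟨w, hw⟩ := (hconn u s).exists_walk_length_eq_dist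
      cases w with
      | nil => exact absurd rfl hu
      | cons h q =>
        refine ⟨_, h, ?_⟩
        have h1 : G.dist _ s ≤ q.length := SimpleGraph.dist_le q
        have h2 : q.length + 1 = G.dist u s := by
          simpa [SimpleGraph.Walk.length_cons] using hw
        omega
    have toward : ∀ (n : ℕ) (u v : V), G.dist u s ≤ n → D u v →
        G.dist v s < G.dist u s := by
      intro n
      induction n with
      | zero =>
        intro u v hle hD
        have h0 : G.dist u s = 0 := Nat.le_zero.mp hle
        have : u = s := (hconn.dist_eq_zero_iff).mp h0
        subst this
        exact absurd hD (hsink v)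
      | succ n ih =>
        intro u v hle hD
        by_contra hge
        push_neg at hge
        have hu : u ≠ s := by
          rintro rfl
          exact hsink v hD
        obtain ⟨p, hadj, hlt⟩ := hparent u hu
        have hpv : p ≠ v := by
          rintro rfl
          exact absurd hlt (not_lt.mpr hge)
        have hnDup : ¬ D u p := fun h => hpv (hout u p v h hD)
        have hDpu : D p u := by
          by_contra h
          exact hnDup ((horient u p hadj).mpr h)
        have hpn : G.dist p s ≤ n := by omega
        have := ih p u hpn hDpu
        omega
    refine Or.inl ⟨s, hsink, ?_, fun u v hD => toward (G.dist u s) u v le_rfl hD⟩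
    intro s' hs'
    by_contra hne
    obtain ⟨p, hadj, hlt⟩ := hparent s' hne
    have hDps' : D p s' := by
      by_contra h
      exact hs' p ((horient s' p hadj).mpr h)
    have := toward (G.dist p s) p s' le_rfl hDps'
    omega
  · right
    intro v
    by_contra h
    push_neg at h
    exact hs ⟨v, h⟩
end
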